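/- For every integer k ≥ 2 and every integer n ≥ 2k−2, every [k,n,1]-graph has a factor of independent transversals. (That is, f(k) ≤ 2k−2.) -/

import Mathlib

/-- A `[k,n,1]`-graph: the vertex set is `Fin k × Fin n`, partitioned into the `k` parts
`V_i = {i} × Fin n` (each of size `n`); there are no edges inside any part, and every
vertex has at most one neighbor in each part (the bipartite graph induced by any pair of
parts is a matching). -/
def IsKN1Graph {k n : ℕ} (G : SimpleGraph (Fin k × Fin n)) : Prop :=
  (∀ u v : Fin k × Fin n, G.Adj u v → u.1 ≠ v.1) ∧
  (∀ u v w : Fin k × Fin n, G.Adj u v → G.Adj u w → v.1 = w.1 → v = w)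

/-- An independent transversal, given by choosing the vertex `(i, f i)` in part `V_i`:
the chosen vertices form an independent set. -/
def IsIndepTransversal {k n : ℕ} (G : SimpleGraph (Fin k × Fin n)) (f : Fin k → Fin n) : Prop :=
  ∀ i j : Fin k, ¬ G.Adj (i, f i) (j, f j)

/-- A factor of independent transversals: `n` pairwise-disjoint independent transversals
(hence covering all vertices). Disjointness is expressed by saying that for each part `i`,
the `n` vertices chosen in `V_i` by the `n` transversals are pairwise distinct. -/
def HasITFactor {k n : ℕ} (G : SimpleGraph (Fin k × Fin n)) : Prop :=
  ∃ T : Fin n → Fin k → Fin n,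
    (∀ m : Fin n, IsIndepTransversal G (T m)) ∧
    (∀ i : Fin k, Function.Injective fun m : Fin n => T m i)


/-- For every `k ≥ 2` and every `n ≥ 2k − 2`, every `[k,n,1]`-graph has a factor of
independent transversals (`f(k) ≤ 2k − 2`). -/
theorem stmt_4 (k n : ℕ) (hk : 2 ≤ k) (hn : 2 * k - 2 ≤ n)
    (G : SimpleGraph (Fin k × Fin n)) (hG : IsKN1Graph G) :
    HasITFactor G := by
  classical
  -- Key: construct a proper "rainbow" coloring part by part.
  have key : ∀ t : ℕ, ∃ c : Fin k → (Fin n ≃ Fin n),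
      ∀ i j : Fin k, i.val < t → j.val < t → ∀ x y : Fin n,
        G.Adj (i, x) (j, y) → c i x ≠ c j y := by
    intro t
    induction t with
    | zero => exact ⟨fun _ => Equiv.refl _, fun i j hi => absurd hi (Nat.not_lt_zero _)⟩
    | succ t ih =>
      obtain ⟨c, hc⟩ := ih
      by_cases ht : t < k
      · set t' : Fin k := ⟨t, ht⟩ with ht'
        -- forbidden colors for vertex (t', x): colors of its neighbors in already-colored parts
        set forb : Fin n → Finset (Fin n) := fun x =>
          (Finset.univ.filter (fun p : Fin k × Fin n => G.Adj (t', x) p)).image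
            (fun p => c p.1 p.2) with hforb
        set allowed : Fin n → Finset (Fin n) := fun x => Finset.univ \ forb x with hallowed
        have hne : ∀ x : Fin n, ∀ p : Fin k × Fin n, G.Adj (t', x) p → p.1 ≠ t' := by
          intro x p h hpt
          exact hG.1 _ _ h (by simp [hpt])
        have hcard_forb : ∀ x : Fin n, (forb x).card ≤ k - 1 := by
          intro x
          calc (forb x).card
              ≤ (Finset.univ.filter (fun p : Fin k × Fin n => G.Adj (t', x) p)).card :=
                Finset.card_image_le
            _ ≤ (Finset.univ.erase t').card := by
                apply Finset.card_le_card_of_injOn Prod.fst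
                · intro p hp
                  simp only [Finset.mem_coe, Finset.mem_filter, Finset.mem_univ, true_and] at hp
                  exact Finset.mem_erase.mpr ⟨hne x p hp, Finset.mem_univ _⟩
                · intro p hp q hq hpq
                  simp only [Finset.coe_filter, Set.mem_setOf_eq, Finset.mem_univ, true_and]
                    at hp hq
                  exact hG.2 _ _ _ hp hq hpq
            _ = k - 1 := by
                rw [Finset.card_erase_of_mem (Finset.mem_univ _)]
                simp
        have hcard_allowed : ∀ x : Fin n, n - (k - 1) ≤ (allowed x).card := by
          intro x
          have : (allowed x).card = n - (forb x).card := by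
            rw [hallowed]
            rw [Finset.card_sdiff_of_subset (Finset.subset_univ _)]
            simp
          rw [this]
          have := hcard_forb x
          omega
        -- each color is forbidden for at most k - 1 vertices of part t'
        have hSm : ∀ m : Fin n,
            (Finset.univ.filter (fun x : Fin n => m ∈ forb x)).card ≤ k - 1 := by
          intro m
          have hsub : (Finset.univ.filter (fun x : Fin n => m ∈ forb x)) ⊆
              (Finset.univ.erase t').biUnion
                (fun j => Finset.univ.filter (fun x : Fin n =>
                  G.Adj (t', x) (j, (c j).symm m))) := by
            intro x hx
            simp only [Finset.mem_filter, Finset.mem_univ, true_and] at hx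
            rw [hforb] at hx
            simp only [Finset.mem_image, Finset.mem_filter, Finset.mem_univ, true_and] at hx
            obtain ⟨p, hadj, hcm⟩ := hx
            have hp2 : p.2 = (c p.1).symm m := by
              rw [← hcm]; simp
            refine Finset.mem_biUnion.mpr ⟨p.1,
              Finset.mem_erase.mpr ⟨hne x p hadj, Finset.mem_univ _⟩, ?_⟩
            simp only [Finset.mem_filter, Finset.mem_univ, true_and]
            rw [← hp2]
            exact hadj
          calc (Finset.univ.filter (fun x : Fin n => m ∈ forb x)).card
              ≤ _ := Finset.card_le_card hsub
            _ ≤ ∑ j ∈ Finset.univ.erase t',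
                  (Finset.univ.filter (fun x : Fin n =>
                    G.Adj (t', x) (j, (c j).symm m))).card := Finset.card_biUnion_le
            _ ≤ ∑ _j ∈ Finset.univ.erase t', 1 := by
                apply Finset.sum_le_sum
                intro j _
                apply Finset.card_le_one.mpr
                intro a ha b hb
                simp only [Finset.mem_filter, Finset.mem_univ, true_and] at ha hb
                have := hG.2 (j, (c j).symm m) (t', a) (t', b) ha.symm hb.symm rfl
                exact congrArg Prod.snd this
            _ = (Finset.univ.erase t').card := by simp
            _ = k - 1 := by
                rw [Finset.card_erase_of_mem (Finset.mem_univ _)]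
                simp
        -- Hall's condition
        have hall : ∀ A : Finset (Fin n), A.card ≤ (A.biUnion allowed).card := by
          intro A
          rcases A.eq_empty_or_nonempty with rfl | ⟨x₀, hx₀⟩
          · simp
          by_cases hA : A.card ≤ n - (k - 1)
          · calc A.card ≤ n - (k - 1) := hA
              _ ≤ (allowed x₀).card := hcard_allowed x₀
              _ ≤ (A.biUnion allowed).card :=
                  Finset.card_le_card (Finset.subset_biUnion_of_mem allowed hx₀)
          · have huniv : A.biUnion allowed = Finset.univ := by
              apply Finset.eq_univ_iff_forall.mpr
              intro m
              by_contra hm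
              have hsub : A ⊆ Finset.univ.filter (fun x : Fin n => m ∈ forb x) := by
                intro x hx
                simp only [Finset.mem_filter, Finset.mem_univ, true_and]
                by_contra hmx
                exact hm (Finset.mem_biUnion.mpr ⟨x, hx,
                  Finset.mem_sdiff.mpr ⟨Finset.mem_univ _, hmx⟩⟩)
              have h1 : A.card ≤ k - 1 := le_trans (Finset.card_le_card hsub) (hSm m)
              omega
            rw [huniv]
            simpa using Finset.card_le_univ A
          -- (note: needed n ≥ 2k-2 and k ≥ 2 above)
        obtain ⟨f, hfinj, hf⟩ :=
          (Finset.all_card_le_biUnion_card_iff_exists_injective allowed).mp hall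
        have hfbij : Function.Bijective f := Finite.injective_iff_bijective.mp hfinj
        set σ : Fin n ≃ Fin n := Equiv.ofBijective f hfbij with hσ
        refine ⟨Function.update c t' σ, ?_⟩
        intro i j hi hj x y hadj
        have hij : i ≠ j := hG.1 (i, x) (j, y) hadj
        have hmemforb : ∀ (jj : Fin k) (xx yy : Fin n), G.Adj (t', xx) (jj, yy) →
            c jj yy ∈ forb xx := by
          intro jj xx yy h
          rw [hforb]
          exact Finset.mem_image.mpr ⟨(jj, yy),
            Finset.mem_filter.mpr ⟨Finset.mem_univ _, h⟩, rfl⟩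
        by_cases hi' : i = t' <;> by_cases hj' : j = t'
        · exact absurd (hi'.trans hj'.symm) hij
        · subst hi'
          rw [Function.update_self, Function.update_of_ne hj']
          have h1 : f x ∉ forb x := (Finset.mem_sdiff.mp (hf x)).2
          have h2 : c j y ∈ forb x := hmemforb j x y hadj
          have : σ x = f x := rfl
          rw [this]
          intro h; rw [h] at h1; exact h1 h2
        · subst hj'
          rw [Function.update_self, Function.update_of_ne hi']
          have h1 : f y ∉ forb y := (Finset.mem_sdiff.mp (hf y)).2
          have h2 : c i x ∈ forb y := hmemforb i y x hadj.symm
          have : σ y = f y := rfl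
          rw [this]
          intro h; rw [← h] at h1; exact h1 h2
        · rw [Function.update_of_ne hi', Function.update_of_ne hj']
          have hii : i.val ≠ t := fun h => hi' (Fin.ext h)
          have hjj : j.val ≠ t := fun h => hj' (Fin.ext h)
          exact hc i j (by omega) (by omega) x y hadj
      · refine ⟨c, fun i j hi hj x y hadj => hc i j ?_ ?_ x y hadj⟩
        · have := i.isLt; omega
        · have := j.isLt; omega
  obtain ⟨c, hc⟩ := key k
  refine ⟨fun m i => (c i).symm m, ?_, ?_⟩
  · intro m i j h
    have := hc i j i.isLt j.isLt _ _ h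
    simp at this
  · intro i m₁ m₂ h
    exact (c i).symm.injective h
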